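/- Assume there exists x̄ ∈ P with Ax̄ − b ∈ core Q. Then K = M. -/

import Mathlib

open Set Filter

/-- The algebraic core of a set in a real vector space. -/
def algebraicCore {V : Type*} [AddCommGroup V] [Module ℝ V] (S : Set V) : Set V :=
  {v | ∀ u : V, ∃ t₀ > (0 : ℝ), ∀ t : ℝ, 0 ≤ t → t ≤ t₀ → v + t • u ∈ S}


lemma sep_core {V : Type*} [AddCommGroup V] [Module ℝ V] (E : Set V) (hE : Convex ℝ E)
    (p₀ : V)
    (hcore : ∀ u : V, ∃ t₀ > (0:ℝ), ∀ t : ℝ, 0 ≤ t → t ≤ t₀ → p₀ + t • u ∈ E)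
    (h0 : (0:V) ∉ E) :
    ∃ F : V →ₗ[ℝ] ℝ, (∀ e ∈ E, F e ≤ 0) ∧ F p₀ ≤ -1 := by
  -- the set S = E - p₀
  set S : Set V := {v | p₀ + v ∈ E} with hSdef
  have hp₀E : p₀ ∈ E := by
    obtain ⟨t₀, ht₀, h⟩ := hcore 0
    simpa using h 0 le_rfl ht₀.le
  have hS0 : (0:V) ∈ S := by simpa [hSdef] using hp₀E
  have hSconv : Convex ℝ S := by
    intro u hu v hv a b ha hb hab
    have : a • (p₀ + u) + b • (p₀ + v) ∈ E := hE hu hv ha hb hab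
    have heq : a • (p₀ + u) + b • (p₀ + v) = p₀ + (a • u + b • v) := by
      rw [smul_add, smul_add]
      rw [show a • p₀ + a • u + (b • p₀ + b • v) = (a+b) • p₀ + (a • u + b • v) by
        rw [add_smul]; abel]
      rw [hab, one_smul]
    rw [heq] at this
    exact this
  have habs : ∀ v : V, ∃ t > (0:ℝ), t • v ∈ S := by
    intro v
    obtain ⟨t₀, ht₀, h⟩ := hcore v
    exact ⟨t₀, ht₀, h t₀ ht₀.le le_rfl⟩
  -- the gauge-defining sets
  set T : V → Set ℝ := fun v => {t : ℝ | 0 < t ∧ t⁻¹ • v ∈ S} with hTdef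
  have hTne : ∀ v, (T v).Nonempty := by
    intro v
    obtain ⟨t, ht, hts⟩ := habs v
    refine ⟨t⁻¹, inv_pos.2 ht, ?_⟩
    rw [inv_inv]; exact hts
  have hTbdd : ∀ v, BddBelow (T v) := fun v => ⟨0, fun t ht => ht.1.le⟩
  have hTup : ∀ v, ∀ t t' : ℝ, t ∈ T v → t ≤ t' → t' ∈ T v := by
    intro v t t' ht htt'
    have ht' : (0:ℝ) < t' := lt_of_lt_of_le ht.1 htt'
    refine ⟨ht', ?_⟩
    have hcomb := hSconv ht.2 hS0 (a := t / t') (b := 1 - t / t')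
      (div_nonneg ht.1.le ht'.le) (by
        have : t / t' ≤ 1 := (div_le_one ht').2 htt'
        linarith) (by ring)
    have : (t / t') • (t⁻¹ • v) = t'⁻¹ • v := by
      rw [smul_smul]
      congr 1
      rw [div_mul_eq_mul_div, mul_inv_cancel₀ ht.1.ne', one_div]
    simpa [this] using hcomb
  set N : V → ℝ := fun v => sInf (T v) with hNdef
  have hNnonneg : ∀ v, 0 ≤ N v := fun v => le_csInf (hTne v) fun t ht => ht.1.le
  have hmem_of_lt : ∀ v a, N v < a → a ∈ T v := by
    intro v a h
    obtain ⟨t, htT, hta⟩ := exists_lt_of_csInf_lt (hTne v) h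
    exact hTup v t a htT hta.le
  have hle_of_mem : ∀ v a, a ∈ T v → N v ≤ a := fun v a h => csInf_le (hTbdd v) h
  -- subadditivity
  have hNadd : ∀ u v, N (u + v) ≤ N u + N v := by
    intro u v
    refine le_of_forall_gt_imp_ge_of_dense fun κ hκ => ?_
    set a := N u + (κ - N u - N v) / 2 with hadef
    set b := N v + (κ - N u - N v) / 2 with hbdef
    have haNu : N u < a := by rw [hadef]; linarith
    have hbNv : N v < b := by rw [hbdef]; linarith
    have haT : a ∈ T u := hmem_of_lt u a haNu
    have hbT : b ∈ T v := hmem_of_lt v b hbNv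
    have hab : a + b = κ := by rw [hadef, hbdef]; ring
    have ha0 : 0 < a := haT.1
    have hb0 : 0 < b := hbT.1
    have hκ0 : 0 < κ := by rw [← hab]; positivity
    refine hle_of_mem _ _ ⟨hκ0, ?_⟩
    have hcomb := hSconv haT.2 hbT.2 (a := a / κ) (b := b / κ)
      (div_nonneg ha0.le hκ0.le) (div_nonneg hb0.le hκ0.le)
      (by field_simp; linarith)
    have h1 : (a / κ) • (a⁻¹ • u) = κ⁻¹ • u := by
      rw [smul_smul]; congr 1
      rw [div_mul_eq_mul_div, mul_inv_cancel₀ ha0.ne', one_div]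
    have h2 : (b / κ) • (b⁻¹ • v) = κ⁻¹ • v := by
      rw [smul_smul]; congr 1
      rw [div_mul_eq_mul_div, mul_inv_cancel₀ hb0.ne', one_div]
    rw [h1, h2, ← smul_add] at hcomb
    exact hcomb
  -- positive homogeneity
  have hNsmul_le : ∀ c : ℝ, 0 < c → ∀ v, N (c • v) ≤ c * N v := by
    intro c hc v
    refine le_of_forall_gt_imp_ge_of_dense fun κ hκ => ?_
    have hκ0 : 0 < κ := lt_of_le_of_lt (mul_nonneg hc.le (hNnonneg v)) hκ
    have : κ / c ∈ T v := hmem_of_lt v _ ((lt_div_iff₀ hc).2 (by linarith [hκ]))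
    refine hle_of_mem _ _ ⟨hκ0, ?_⟩
    have heq : κ⁻¹ • (c • v) = (κ / c)⁻¹ • v := by
      rw [smul_smul]; congr 1; field_simp
    rw [heq]
    exact this.2
  have hNsmul : ∀ c : ℝ, 0 < c → ∀ v, N (c • v) = c * N v := by
    intro c hc v
    refine le_antisymm (hNsmul_le c hc v) ?_
    have := hNsmul_le c⁻¹ (inv_pos.2 hc) (c • v)
    rw [smul_smul, inv_mul_cancel₀ hc.ne', one_smul] at this
    have hc' : c * N v ≤ c * (c⁻¹ * N (c • v)) :=
      mul_le_mul_of_nonneg_left this hc.le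
    rwa [← mul_assoc, mul_inv_cancel₀ hc.ne', one_mul] at hc'
  have hNle1 : ∀ v ∈ S, N v ≤ 1 := by
    intro v hv
    exact hle_of_mem v 1 ⟨one_pos, by simpa using hv⟩
  -- N (-p₀) ≥ 1
  have hv₀ : (1:ℝ) ≤ N (-p₀) := by
    by_contra h
    push_neg at h
    have h1 : (1:ℝ) ∈ T (-p₀) := hmem_of_lt _ 1 h
    have : -p₀ ∈ S := by simpa using h1.2
    exact h0 (by simpa [hSdef] using this)
  have hp₀ne : p₀ ≠ 0 := by
    intro h; exact h0 (h ▸ hp₀E)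
  have hv₀ne : -p₀ ≠ (0:V) := by simpa using hp₀ne
  set aN : ℝ := N (-p₀) with haNdef
  -- partial linear map on the span of -p₀
  set f : V →ₗ.[ℝ] ℝ := LinearPMap.mkSpanSingleton (-p₀) aN hv₀ne with hfdef
  have hf : ∀ x : f.domain, f x ≤ N x := by
    rintro ⟨x, hx⟩
    have hx' : x ∈ Submodule.span ℝ {-p₀} := hx
    obtain ⟨d, hd⟩ := Submodule.mem_span_singleton.1 hx'
    have hfx : f ⟨x, hx⟩ = d • aN := by
      have : (⟨x, hx⟩ : f.domain) = ⟨d • -p₀, hd ▸ hx⟩ := Subtype.ext hd.symm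
      rw [this]
      exact LinearPMap.mkSpanSingleton'_apply (-p₀) aN _ d _
    rw [hfx]
    simp only [smul_eq_mul]
    rcases lt_trichotomy d 0 with hdlt | hdeq | hdgt
    · have : d * aN < 0 := mul_neg_of_neg_of_pos hdlt (by linarith)
      exact le_trans this.le (hNnonneg _)
    · subst hdeq
      simp only [zero_mul]
      exact hNnonneg x
    · have hNx : N x = d * aN := by rw [← hd]; exact hNsmul d hdgt (-p₀)
      exact hNx.ge
  obtain ⟨g, hg_eq, hg_le⟩ := exists_extension_of_le_sublinear f N hNsmul hNadd hf
  have hgv₀ : g (-p₀) = aN := by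
    have hmem : -p₀ ∈ f.domain := by
      rw [hfdef, LinearPMap.domain_mkSpanSingleton]
      exact Submodule.mem_span_singleton_self _
    have h1 : f ⟨-p₀, hmem⟩ = aN := LinearPMap.mkSpanSingleton_apply ℝ ℝ hv₀ne aN
    exact (hg_eq ⟨-p₀, hmem⟩).trans h1
  have hgp₀ : g p₀ = -aN := by
    have h := map_neg g p₀
    rw [hgv₀] at h
    linarith
  refine ⟨g, ?_, ?_⟩
  · intro e he
    have heS : e - p₀ ∈ S := by
      have : p₀ + (e - p₀) = e := by abel
      simpa [hSdef, this] using he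
    have := le_trans (hg_le (e - p₀)) (hNle1 _ heS)
    rw [map_sub] at this
    have : g e ≤ 1 + g p₀ := by linarith
    rw [hgp₀] at this
    linarith
  · rw [hgp₀]; linarith

lemma arith_aux1 (g v β : ℝ) (hβ : β < 0)
    (h : ∀ s : ℝ, 0 < s → g + (v + s) * β ≤ 0) : g + v * β ≤ 0 := by
  by_contra hL
  push_neg at hL
  have h2β : (0:ℝ) < 2 * (-β) := by linarith
  have hs := h ((g + v * β) / (2 * (-β))) (div_pos hL h2β)
  have hexp : (v + (g + v * β) / (2 * (-β))) * β
      = v * β + (g + v * β) / (2 * (-β)) * β := add_mul _ _ _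
  have hsβ : (g + v * β) / (2 * (-β)) * β = -((g + v * β) / 2) := by
    field_simp [hβ.ne]
  rw [hexp, hsβ] at hs
  linarith

lemma arith_aux2 (W v β : ℝ) (hβ : β < 0) (h : -β * W + v * β ≤ 0) : W ≤ v := by
  by_contra hcon
  push_neg at hcon
  nlinarith [mul_pos (neg_pos.mpr hβ) (sub_pos.mpr hcon)]

set_option maxHeartbeats 2000000 in
theorem K_eq_M_algebraic
    {X Z : Type*} [AddCommGroup X] [Module ℝ X] [AddCommGroup Z] [Module ℝ Z]
    (A : X →ₗ[ℝ] Z)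
    (P : Set X) (Q : Set Z)
    (hPne : P.Nonempty)
    (hPcone : ∀ s t : ℝ, 0 ≤ s → 0 ≤ t → ∀ u ∈ P, ∀ v ∈ P, s • u + t • v ∈ P)
    (hQne : Q.Nonempty)
    (hQcone : ∀ s t : ℝ, 0 ≤ s → 0 ≤ t → ∀ u ∈ Q, ∀ v ∈ Q, s • u + t • v ∈ Q)
    (b : Z) (c : Module.Dual ℝ X)
    (Pstar : Set (Module.Dual ℝ X)) (hPstar : Pstar = {y | ∀ x ∈ P, 0 ≤ y x})
    (Qstar : Set (Module.Dual ℝ Z)) (hQstar : Qstar = {w | ∀ z ∈ Q, 0 ≤ w z})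
    (FP : Set X) (hFP : FP = {x ∈ P | A x - b ∈ Q})
    (FD : Set (Module.Dual ℝ Z)) (hFD : FD = {w ∈ Qstar | c - A.dualMap w ∈ Pstar})
    (Kset : Set (Module.Dual ℝ X × ℝ))
    (hK : Kset = {p | ∃ w ∈ Qstar, ∃ y ∈ Pstar, p.1 = c - A.dualMap w - y ∧ p.2 ≤ w b})
    (Mset : Set (Module.Dual ℝ X × ℝ))
    (hM : Mset = {p | ∀ x ∈ FP, p.2 ≤ (c - p.1) x})
    (hcore : ∃ xbar ∈ P, A xbar - b ∈ algebraicCore Q) :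
    Kset = Mset := by
  subst hPstar hQstar hFP hFD hK hM
  have hP0 : (0:X) ∈ P := by
    obtain ⟨u, hu⟩ := hPne
    simpa using hPcone 0 0 le_rfl le_rfl u hu u hu
  have hQ0 : (0:Z) ∈ Q := by
    obtain ⟨u, hu⟩ := hQne
    simpa using hQcone 0 0 le_rfl le_rfl u hu u hu
  have hPsmul : ∀ l : ℝ, 0 ≤ l → ∀ x ∈ P, l • x ∈ P := by
    intro l hl x hx
    simpa using hPcone l 0 hl le_rfl x hx x hx
  have hQsmul : ∀ l : ℝ, 0 ≤ l → ∀ q ∈ Q, l • q ∈ Q := by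
    intro l hl q hq
    simpa using hQcone l 0 hl le_rfl q hq q hq
  ext ⟨y, r⟩
  simp only [Set.mem_setOf_eq, Set.mem_sep_iff]
  constructor
  · -- K ⊆ M : easy direction
    rintro ⟨w, hw, p, hp, hy, hr⟩ x ⟨hxP, hxQ⟩
    have hy' : (c - y) x = w (A x) + p x := by
      rw [hy]
      simp only [LinearMap.sub_apply, LinearMap.dualMap_apply]
      ring
    have h1 : 0 ≤ w (A x - b) := hw _ hxQ
    have h2 : 0 ≤ p x := hp x hxP
    rw [map_sub] at h1
    rw [hy']
    linarith
  · -- M ⊆ K : separation direction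
    intro hyr
    obtain ⟨xbar, hxbarP, hxbarcore'⟩ := hcore
    have hxbarcore : ∀ u : Z, ∃ t₀ > (0:ℝ), ∀ t : ℝ, 0 ≤ t → t ≤ t₀ →
        (A xbar - b) + t • u ∈ Q := hxbarcore'
    have hqbarQ : A xbar - b ∈ Q := by
      obtain ⟨t₀, ht₀, hh⟩ := hxbarcore 0
      simpa using hh 0 le_rfl ht₀.le
    -- the convex set to separate from 0
    set E : Set (Z × ℝ) :=
      {v | ∃ x ∈ P, ∃ q ∈ Q, ∃ s : ℝ, 0 < s ∧ v = (A x - b - q, (c - y) x - r + s)}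
      with hEdef
    have hEconv : Convex ℝ E := by
      rintro v₁ ⟨x₁, hx₁, q₁, hq₁, s₁, hs₁, rfl⟩ v₂ ⟨x₂, hx₂, q₂, hq₂, s₂, hs₂, rfl⟩
        a a' ha ha' haa
      refine ⟨a • x₁ + a' • x₂, hPcone a a' ha ha' x₁ hx₁ x₂ hx₂,
        a • q₁ + a' • q₂, hQcone a a' ha ha' q₁ hq₁ q₂ hq₂,
        a * s₁ + a' * s₂, ?_, ?_⟩
      · have hmin : 0 < min s₁ s₂ := lt_min hs₁ hs₂
        calc 0 < min s₁ s₂ := hmin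
          _ = a * min s₁ s₂ + a' * min s₁ s₂ := by rw [← add_mul, haa, one_mul]
          _ ≤ a * s₁ + a' * s₂ :=
            add_le_add (mul_le_mul_of_nonneg_left (min_le_left _ _) ha)
              (mul_le_mul_of_nonneg_left (min_le_right _ _) ha')
      · ext
        · simp only [Prod.fst_add, Prod.smul_fst, smul_sub, map_add, map_smul]
          conv_rhs => rw [show (b:Z) = a • b + a' • b from by
            rw [← add_smul, haa, one_smul]]
          abel
        · simp only [Prod.snd_add, Prod.smul_snd, smul_eq_mul, map_add, map_smul]
          linear_combination (-(r : ℝ)) * haa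
    set p₀ : Z × ℝ := ((0:Z), (c - y) xbar - r + 1) with hp₀def
    have hcore' : ∀ u : Z × ℝ, ∃ t₀ > (0:ℝ), ∀ t : ℝ, 0 ≤ t → t ≤ t₀ → p₀ + t • u ∈ E := by
      rintro ⟨uz, uα⟩
      obtain ⟨t₁, ht₁, hq⟩ := hxbarcore (-uz)
      have ha1 : (0:ℝ) < 2 * (|uα| + 1) := by positivity
      refine ⟨min t₁ (1 / (2 * (|uα| + 1))), lt_min ht₁ (by positivity), ?_⟩
      intro t ht0 htle
      have hspos : 0 < 1 + t * uα := by
        have h2 : t ≤ 1 / (2 * (|uα| + 1)) := le_trans htle (min_le_right _ _)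
        have h3 : t * |uα| ≤ 1 / (2 * (|uα| + 1)) * |uα| :=
          mul_le_mul_of_nonneg_right h2 (abs_nonneg uα)
        have h4 : 1 / (2 * (|uα| + 1)) * |uα| ≤ 1 / 2 := by
          rw [div_mul_eq_mul_div, one_mul, div_le_div_iff₀ ha1 (by norm_num)]
          nlinarith [abs_nonneg uα]
        have h5 : 0 ≤ t * (uα + |uα|) :=
          mul_nonneg ht0 (by linarith [neg_abs_le uα])
        nlinarith
      refine ⟨xbar, hxbarP, A xbar - b + t • (-uz),
        hq t ht0 (le_trans htle (min_le_left _ _)), 1 + t * uα, hspos, ?_⟩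
      ext
      · simp only [hp₀def, Prod.fst_add, Prod.smul_fst, smul_neg]
        abel
      · simp only [hp₀def, Prod.snd_add, Prod.smul_snd, smul_eq_mul]
        ring
    have h0 : (0 : Z × ℝ) ∉ E := by
      rintro ⟨x, hx, q, hq, s, hs, heq⟩
      have h1 : (0:Z) = A x - b - q := congrArg Prod.fst heq
      have h2 : (0:ℝ) = (c - y) x - r + s := congrArg Prod.snd heq
      have hxQ : A x - b ∈ Q := by
        have h3 : A x - b = q := sub_eq_zero.mp h1.symm
        rw [h3]; exact hq
      have hxFP := hyr x ⟨hx, hxQ⟩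
      linarith
    obtain ⟨F, hFE, hFp₀⟩ := sep_core E hEconv p₀ hcore' h0
    set G : Module.Dual ℝ Z := F.comp (LinearMap.inl ℝ Z ℝ) with hGdef
    set β : ℝ := F ((0:Z), (1:ℝ)) with hβdef
    have hFsplit : ∀ (z : Z) (t : ℝ), F (z, t) = G z + t * β := by
      intro z t
      have hzt : (z, t) = ((z, 0) : Z × ℝ) + t • ((0:Z), (1:ℝ)) := by
        simp [Prod.ext_iff]
      rw [hzt, map_add, map_smul]
      simp [hGdef, hβdef, smul_eq_mul]
    have key : ∀ x ∈ P, ∀ q ∈ Q, ∀ s : ℝ, 0 < s →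
        G (A x - b - q) + ((c - y) x - r + s) * β ≤ 0 := by
      intro x hx q hq s hs
      have h := hFE _ ⟨x, hx, q, hq, s, hs, rfl⟩
      rwa [hFsplit] at h
    have hβ0 : β ≤ 0 := by
      by_contra h
      push_neg at h
      set v := (c - y) xbar - r with hvdef
      have hs1 : (0:ℝ) < max 1 (1 - v) := lt_of_lt_of_le one_pos (le_max_left _ _)
      have hkey := key xbar hxbarP _ hqbarQ (max 1 (1 - v)) hs1
      have hz : A xbar - b - (A xbar - b) = 0 := by abel
      rw [hz, map_zero] at hkey
      have hvpos : 0 < v + max 1 (1 - v) := by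
        rcases le_max_iff.1 (le_refl (max 1 (1 - v))) with _ | _
        · nlinarith [le_max_left (1:ℝ) (1-v), le_max_right (1:ℝ) (1-v)]
        · nlinarith [le_max_left (1:ℝ) (1-v), le_max_right (1:ℝ) (1-v)]
      nlinarith [mul_pos hvpos h]
    have hβne : β ≠ 0 := by
      intro hβz
      have hGnonneg : ∀ u : Z, 0 ≤ G u := by
        intro u
        obtain ⟨t₁, ht₁, hh⟩ := hxbarcore u
        have hqQ : A xbar - b + t₁ • u ∈ Q := hh t₁ ht₁.le le_rfl
        have hk := key xbar hxbarP _ hqQ 1 one_pos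
        rw [hβz, mul_zero, add_zero] at hk
        have hz : A xbar - b - (A xbar - b + t₁ • u) = -(t₁ • u) := by abel
        rw [hz, map_neg, map_smul, smul_eq_mul] at hk
        nlinarith
      have hG0 : ∀ u : Z, G u = 0 := by
        intro u
        have h1 := hGnonneg u
        have h2 := hGnonneg (-u)
        rw [map_neg] at h2
        linarith
      have hFp₀' : F p₀ = 0 := by
        rw [hp₀def, hFsplit, hG0, hβz, mul_zero, add_zero]
      rw [hFp₀'] at hFp₀
      linarith
    have hβneg : β < 0 := lt_of_le_of_ne hβ0 hβne
    set w : Module.Dual ℝ Z := (-β)⁻¹ • G with hwdef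
    have hG : ∀ z : Z, G z = (-β) * w z := by
      intro z
      simp only [hwdef, LinearMap.smul_apply, smul_eq_mul]
      rw [← mul_assoc, mul_inv_cancel₀ (by linarith : -β ≠ 0), one_mul]
    have key2 : ∀ x ∈ P, ∀ q ∈ Q, w (A x - b) - w q ≤ (c - y) x - r := by
      intro x hx q hq
      have hlim : G (A x - b - q) + ((c - y) x - r) * β ≤ 0 :=
        arith_aux1 _ _ β hβneg (fun s hs => key x hx q hq s hs)
      rw [hG] at hlim
      have hm : w (A x - b - q) = w (A x - b) - w q := map_sub w _ _
      rw [hm] at hlim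
      exact arith_aux2 _ _ β hβneg hlim
    clear hG key hFsplit hFE hFp₀ hEconv hcore' h0 hβ0 hβne hβneg hqbarQ
    clear hwdef hGdef hβdef hp₀def hEdef
    clear_value w β G p₀ E
    clear β G p₀ E
    have hrwb : r ≤ w b := by
      have h := key2 0 hP0 0 hQ0
      rw [map_zero A, zero_sub, map_neg, map_zero w, map_zero (c - y)] at h
      linarith
    have hwQstar : ∀ q ∈ Q, 0 ≤ w q := by
      intro q hq
      by_contra hcon
      push_neg at hcon
      set l := (|w b - r| + 1) / (-(w q)) with hldef
      have hl0 : 0 ≤ l := le_of_lt (div_pos (by positivity) (by linarith))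
      have hlq : l • q ∈ Q := hQsmul l hl0 q hq
      have h2 := key2 0 hP0 _ hlq
      rw [map_zero A, zero_sub, map_neg, map_smul, smul_eq_mul,
        map_zero (c - y)] at h2
      have h3 : l * -(w q) = |w b - r| + 1 := by
        rw [hldef]
        exact div_mul_cancel₀ _ (ne_of_gt (by linarith : (0:ℝ) < -(w q)))
      have h4 := le_abs_self (w b - r)
      have h5 : l * -(w q) = -(l * w q) := by ring
      linarith
    have hφ : ∀ x ∈ P, 0 ≤ (c - A.dualMap w - y) x := by
      intro x hx
      by_contra hcon
      push_neg at hcon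
      have hφx : (c - A.dualMap w - y) x = (c - y) x - w (A x) := by
        simp only [LinearMap.sub_apply, LinearMap.dualMap_apply]
        ring
      rw [hφx] at hcon
      set l := (|r - w b| + 1) / (-((c - y) x - w (A x))) with hldef
      have hl0 : 0 ≤ l := le_of_lt (div_pos (by positivity) (by linarith))
      have hlx : l • x ∈ P := hPsmul l hl0 x hx
      have h2 := key2 _ hlx 0 hQ0
      rw [map_smul A, map_zero w, map_smul (c - y), smul_eq_mul, sub_zero] at h2
      have he : w (l • A x - b) = l * w (A x) - w b := by
        rw [map_sub, map_smul, smul_eq_mul]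
      rw [he] at h2
      have h3 : l * -((c - y) x - w (A x)) = |r - w b| + 1 := by
        rw [hldef]
        exact div_mul_cancel₀ _ (ne_of_gt (by linarith : (0:ℝ) < -((c - y) x - w (A x))))
      have h4 := neg_abs_le (r - w b)
      have h5 : l * -((c - y) x - w (A x)) = l * w (A x) - l * ((c - y) x) := by ring
      linarith
    refine ⟨w, hwQstar, c - A.dualMap w - y, hφ, ?_, hrwb⟩
    abel
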